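/- For all reals x and h with 0 < h ≤ (5/6)·x, one has |(x+h)·log(x+h) - 2·x·log x + (x-h)·log(x-h)| ≤ x·h²/(x² - h²) ≤ 3.4·h²/x. -/

import Mathlib

lemma log_one_add_cubic (u : ℝ) (hu : 0 ≤ u) :
    Real.log (1 + u) ≤ u - u ^ 2 / 2 + u ^ 3 / 3 := by
  set f : ℝ → ℝ := fun t => t - t ^ 2 / 2 + t ^ 3 / 3 - Real.log (1 + t) with hf
  have hd : ∀ t : ℝ, 0 < 1 + t →
      HasDerivAt f (1 - (2 : ℕ) * t ^ 1 / 2 + (3 : ℕ) * t ^ 2 / 3 - 1 / (1 + t)) t := by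
    intro t ht
    exact (((hasDerivAt_id t).sub ((hasDerivAt_pow 2 t).div_const 2)).add
      ((hasDerivAt_pow 3 t).div_const 3)).sub
      (((hasDerivAt_id t).const_add 1).log (ne_of_gt ht))
  have hmono : MonotoneOn f (Set.Ici 0) := by
    apply monotoneOn_of_deriv_nonneg (convex_Ici 0)
    · apply ContinuousOn.sub
      · fun_prop
      · apply ContinuousOn.log (by fun_prop)
        intro t ht
        simp only [Set.mem_Ici] at ht
        positivity
    · intro t ht
      rw [interior_Ici] at ht
      exact ((hd t (by simp only [Set.mem_Ioi] at ht; linarith)).differentiableAt).differentiableWithinAt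
    · intro t ht
      rw [interior_Ici, Set.mem_Ioi] at ht
      have h1 : (0:ℝ) < 1 + t := by linarith
      rw [(hd t h1).deriv]
      have : 1 - (2 : ℕ) * t ^ 1 / 2 + (3 : ℕ) * t ^ 2 / 3 - 1 / (1 + t)
          = t ^ 3 / (1 + t) := by
        field_simp
        ring
      rw [this]
      positivity
  have h0 : f 0 = 0 := by simp [hf]
  have := hmono (Set.self_mem_Ici) (Set.mem_Ici.mpr hu) hu
  rw [h0] at this
  have h2 : (0:ℝ) ≤ u - u ^ 2 / 2 + u ^ 3 / 3 - Real.log (1 + u) := this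
  linarith

lemma log_one_sub_cubic (u : ℝ) (hu : 0 ≤ u) (hu1 : u < 1) :
    Real.log (1 - u) ≤ -u - u ^ 2 / 2 - u ^ 3 / 3 := by
  set f : ℝ → ℝ := fun t => -t - t ^ 2 / 2 - t ^ 3 / 3 - Real.log (1 - t) with hf
  have hd : ∀ t : ℝ, 0 < 1 - t →
      HasDerivAt f (-1 - (2 : ℕ) * t ^ 1 / 2 - (3 : ℕ) * t ^ 2 / 3 - -1 / (1 - t)) t := by
    intro t ht
    exact ((((hasDerivAt_id t).neg).sub ((hasDerivAt_pow 2 t).div_const 2)).sub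
      ((hasDerivAt_pow 3 t).div_const 3)).sub
      (((hasDerivAt_id t).const_sub 1).log (ne_of_gt ht))
  have hmono : MonotoneOn f (Set.Ico 0 1) := by
    apply monotoneOn_of_deriv_nonneg (convex_Ico 0 1)
    · apply ContinuousOn.sub
      · fun_prop
      · apply ContinuousOn.log (by fun_prop)
        intro t ht
        simp only [Set.mem_Ico] at ht
        have : (0:ℝ) < 1 - t := by linarith [ht.2]
        positivity
    · intro t ht
      rw [interior_Ico, Set.mem_Ioo] at ht
      exact ((hd t (by linarith [ht.2])).differentiableAt).differentiableWithinAt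
    · intro t ht
      rw [interior_Ico, Set.mem_Ioo] at ht
      have h1 : (0:ℝ) < 1 - t := by linarith [ht.2]
      rw [(hd t h1).deriv]
      have ht0 : 0 < t := ht.1
      have : -1 - (2 : ℕ) * t ^ 1 / 2 - (3 : ℕ) * t ^ 2 / 3 - -1 / (1 - t)
          = t ^ 3 / (1 - t) := by
        field_simp
        ring
      rw [this]
      positivity
  have h0 : f 0 = 0 := by simp [hf]
  have := hmono (Set.mem_Ico.mpr ⟨le_refl 0, one_pos⟩) (Set.mem_Ico.mpr ⟨hu, hu1⟩) hu
  rw [h0] at this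
  have h2 : (0:ℝ) ≤ -u - u ^ 2 / 2 - u ^ 3 / 3 - Real.log (1 - u) := this
  linarith

lemma second_part (x h : ℝ) (hx : 0 < x) (hh : 0 < h) (hhx : h ≤ 5 / 6 * x) :
    x * h ^ 2 / (x ^ 2 - h ^ 2) ≤ 3.4 * h ^ 2 / x := by
  have hhx' : h < x := by linarith
  have hden : 0 < x ^ 2 - h ^ 2 := by nlinarith
  rw [div_le_div_iff₀ hden hx]
  have hsq : h ^ 2 ≤ 25 / 36 * x ^ 2 := by nlinarith
  have h4 : h ^ 2 * h ^ 2 ≤ 25 / 36 * x ^ 2 * h ^ 2 :=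
    mul_le_mul_of_nonneg_right hsq (sq_nonneg h)
  nlinarith [h4]

theorem xlogx_second_diff_bound (x h : ℝ) (hx : 0 < x) (hh : 0 < h) (hhx : h ≤ 5 / 6 * x) :
    |(x + h) * Real.log (x + h) - 2 * (x * Real.log x) + (x - h) * Real.log (x - h)|
        ≤ x * h ^ 2 / (x ^ 2 - h ^ 2) ∧
      x * h ^ 2 / (x ^ 2 - h ^ 2) ≤ 3.4 * h ^ 2 / x := by
  have hhx' : h < x := by linarith
  have hxh : 0 < x + h := by linarith
  have hxmh : 0 < x - h := by linarith
  have hden : 0 < x ^ 2 - h ^ 2 := by nlinarith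
  set u : ℝ := h / x with hu
  have hu0 : 0 < u := div_pos hh hx
  have hu1 : u < 1 := (div_lt_one hx).mpr hhx'
  have h1u : 0 < 1 + u := by linarith
  have h1mu : 0 < 1 - u := by linarith
  have hxp : x + h = x * (1 + u) := by rw [hu]; field_simp
  have hxm : x - h = x * (1 - u) := by rw [hu]; field_simp
  have hlp : Real.log (x + h) = Real.log x + Real.log (1 + u) := by
    rw [hxp, Real.log_mul (ne_of_gt hx) (ne_of_gt h1u)]
  have hlm : Real.log (x - h) = Real.log x + Real.log (1 - u) := by
    rw [hxm, Real.log_mul (ne_of_gt hx) (ne_of_gt h1mu)]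
  set L1 := Real.log (1 + u) with hL1
  set L2 := Real.log (1 - u) with hL2
  have hD : (x + h) * Real.log (x + h) - 2 * (x * Real.log x) + (x - h) * Real.log (x - h)
      = (x + h) * L1 + (x - h) * L2 := by
    rw [hlp, hlm]; ring
  -- upper bounds on logs
  have hU1 : L1 ≤ u - u ^ 2 / 2 + u ^ 3 / 3 := log_one_add_cubic u hu0.le
  have hU2 : L2 ≤ -u - u ^ 2 / 2 - u ^ 3 / 3 := log_one_sub_cubic u hu0.le hu1
  -- lower bounds on logs
  have hLow1 : u / (1 + u) ≤ L1 := by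
    have := Real.log_le_sub_one_of_pos (show (0:ℝ) < 1 / (1 + u) by positivity)
    rw [Real.log_div one_ne_zero (ne_of_gt h1u), Real.log_one] at this
    have h2 : 1 / (1 + u) - 1 = -(u / (1 + u)) := by field_simp; ring
    rw [h2] at this
    linarith
  have hLow2 : -(u / (1 - u)) ≤ L2 := by
    have := Real.log_le_sub_one_of_pos (show (0:ℝ) < 1 / (1 - u) by positivity)
    rw [Real.log_div one_ne_zero (ne_of_gt h1mu), Real.log_one] at this
    have h2 : 1 / (1 - u) - 1 = u / (1 - u) := by field_simp; ring
    rw [h2] at this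
    linarith
  -- nonnegativity of the second difference
  have hlow : 0 ≤ (x + h) * L1 + (x - h) * L2 := by
    have hux : x * u = h := by rw [hu]; field_simp
    have e1 : (x + h) * (u / (1 + u)) = h := by
      rw [hxp, mul_assoc, mul_div_assoc', mul_div_cancel_left₀ _ (ne_of_gt h1u), hux]
    have e2 : (x - h) * (-(u / (1 - u))) = -h := by
      rw [hxm, mul_neg, mul_assoc, mul_div_assoc', mul_div_cancel_left₀ _ (ne_of_gt h1mu), hux]
    have b1 : (x + h) * (u / (1 + u)) ≤ (x + h) * L1 :=
      mul_le_mul_of_nonneg_left hLow1 hxh.le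
    have b2 : (x - h) * (-(u / (1 - u))) ≤ (x - h) * L2 :=
      mul_le_mul_of_nonneg_left hLow2 hxmh.le
    rw [e1] at b1; rw [e2] at b2
    linarith
  -- upper bound
  have hupper : (x + h) * L1 + (x - h) * L2 ≤ x * h ^ 2 / (x ^ 2 - h ^ 2) := by
    have b1 : (x + h) * L1 ≤ (x + h) * (u - u ^ 2 / 2 + u ^ 3 / 3) :=
      mul_le_mul_of_nonneg_left hU1 hxh.le
    have b2 : (x - h) * L2 ≤ (x - h) * (-u - u ^ 2 / 2 - u ^ 3 / 3) :=
      mul_le_mul_of_nonneg_left hU2 hxmh.le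
    have key : (x + h) * (u - u ^ 2 / 2 + u ^ 3 / 3) + (x - h) * (-u - u ^ 2 / 2 - u ^ 3 / 3)
        ≤ x * h ^ 2 / (x ^ 2 - h ^ 2) := by
      have e : (x + h) * (u - u ^ 2 / 2 + u ^ 3 / 3) + (x - h) * (-u - u ^ 2 / 2 - u ^ 3 / 3)
          = h ^ 2 / x + 2 * h ^ 4 / (3 * x ^ 3) := by
        rw [hu]; field_simp; ring
      rw [e, div_add_div _ _ (ne_of_gt hx) (by positivity), div_le_div_iff₀ (by positivity) hden]
      nlinarith [mul_pos (pow_pos hx 3) (pow_pos hh 4), mul_pos hx (pow_pos hh 6)]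
    linarith
  have hBnn : 0 ≤ x * h ^ 2 / (x ^ 2 - h ^ 2) := by positivity
  constructor
  · rw [hD, abs_of_nonneg hlow]
    exact hupper
  · exact second_part x h hx hh hhx
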